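/- Let ρ : ℝ^d → ℝ^d be a C^k-diffeomorphism (k ≥ 1) with M ≤ |det(Dρ)| and |D^i ρ| ≤ N for i = 1,...,k. Then there exist positive constants M' = M'(N,d) and N' = N'(N,M,d,k) such that the inverse g = ρ^{-1} satisfies M' ≤ |det(Dg)| and |D^i g| ≤ N' for i = 1,...,k. -/

import Mathlib

open MeasureTheory

set_option maxSynthPendingDepth 3
set_option synthInstance.maxHeartbeats 1000000
set_option maxHeartbeats 4000000

section AuxLemmas

open ContinuousLinearMap

private lemma entry_abs_le' {d : ℕ} (A : (Fin d → ℝ) →L[ℝ] (Fin d → ℝ)) (i j : Fin d) :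
    |LinearMap.toMatrix' (A : (Fin d → ℝ) →ₗ[ℝ] (Fin d → ℝ)) i j| ≤ ‖A‖ := by
  rw [LinearMap.toMatrix'_apply]
  have h0 : (fun j' : Fin d => if j' = j then (1:ℝ) else 0) = Pi.single j 1 := by
    funext j'
    rw [Pi.single_apply]
  have h1 : ‖(fun j' : Fin d => if j' = j then (1:ℝ) else 0)‖ = 1 := by
    rw [h0, Pi.norm_single]
    simp
  rw [← h0]
  calc |(A : (Fin d → ℝ) →ₗ[ℝ] (Fin d → ℝ)) (fun j' => if j' = j then (1:ℝ) else 0) i|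
      ≤ ‖A (fun j' => if j' = j then (1:ℝ) else 0)‖ := by
        rw [ContinuousLinearMap.coe_coe, ← Real.norm_eq_abs]
        exact norm_le_pi_norm (A fun j' => if j' = j then (1:ℝ) else 0) i
    _ ≤ ‖A‖ * ‖(fun j' : Fin d => if j' = j then (1:ℝ) else 0)‖ := A.le_opNorm _
    _ = ‖A‖ := by rw [h1, mul_one]

private lemma clm_det_abs_le' {d : ℕ} {N : ℝ} (A : (Fin d → ℝ) →L[ℝ] (Fin d → ℝ))
    (hA : ‖A‖ ≤ N) : |A.det| ≤ (Nat.factorial d : ℝ) * (max N 1) ^ d := by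
  have h := Matrix.det_le (A := LinearMap.toMatrix' (A : (Fin d → ℝ) →ₗ[ℝ] (Fin d → ℝ)))
    (abv := AbsoluteValue.abs) (x := max N 1)
    (fun i j => (entry_abs_le' A i j).trans (hA.trans (le_max_left _ _)))
  rw [LinearMap.det_toMatrix'] at h
  simpa [Fintype.card_fin, nsmul_eq_mul] using h

private lemma clm_inv_norm_bound' {d : ℕ} {M N : ℝ} (hM : 0 < M)
    (A B : (Fin d → ℝ) →L[ℝ] (Fin d → ℝ))
    (hAB : A.comp B = ContinuousLinearMap.id ℝ _)
    (hA : ‖A‖ ≤ N) (hdet : M ≤ |A.det|) :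
    ‖B‖ ≤ (d : ℝ) * ((Nat.factorial d : ℝ) * (max N 1) ^ d / M) := by
  set MA := LinearMap.toMatrix' (A : (Fin d → ℝ) →ₗ[ℝ] (Fin d → ℝ)) with hMA
  set MB := LinearMap.toMatrix' (B : (Fin d → ℝ) →ₗ[ℝ] (Fin d → ℝ)) with hMB
  set eb : ℝ := (Nat.factorial d : ℝ) * (max N 1) ^ d / M with heb
  have heb0 : 0 ≤ eb := by positivity
  have hMul : MA * MB = 1 := by
    rw [hMA, hMB, ← LinearMap.toMatrix'_mul]
    have : ((A : (Fin d → ℝ) →ₗ[ℝ] (Fin d → ℝ)) * (B : (Fin d → ℝ) →ₗ[ℝ] (Fin d → ℝ)))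
        = ((A.comp B : (Fin d → ℝ) →L[ℝ] (Fin d → ℝ)) : (Fin d → ℝ) →ₗ[ℝ] (Fin d → ℝ)) := by
      rw [ContinuousLinearMap.toLinearMap_comp, Module.End.mul_eq_comp]
    rw [this, hAB, ContinuousLinearMap.coe_id, LinearMap.toMatrix'_id]
  have hMBeq : MB = MA⁻¹ := (Matrix.inv_eq_right_inv hMul).symm
  have hdetA : MA.det = A.det := LinearMap.det_toMatrix' _
  have hdet' : M ≤ |MA.det| := by rw [hdetA]; exact hdet
  have hentry : ∀ i j, |MB i j| ≤ eb := by
    intro i j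
    rw [hMBeq, Matrix.inv_def, Matrix.smul_apply, smul_eq_mul, abs_mul]
    have h1 : |Ring.inverse MA.det| ≤ M⁻¹ := by
      rw [Ring.inverse_eq_inv, abs_inv]
      exact inv_anti₀ hM hdet'
    have h2 : |MA.adjugate i j| ≤ (Nat.factorial d : ℝ) * (max N 1) ^ d := by
      rw [Matrix.adjugate_apply]
      have h := Matrix.det_le (A := MA.updateRow j (Pi.single i 1))
        (abv := AbsoluteValue.abs) (x := max N 1) ?_
      · simpa [Fintype.card_fin, nsmul_eq_mul] using h
      · intro i' j'
        rw [Matrix.updateRow_apply]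
        have habs : ∀ x : ℝ, AbsoluteValue.abs x = |x| := fun _ => rfl
        split_ifs with hij
        · rw [habs, Pi.single_apply]
          split_ifs with h
          · rw [abs_one]
            exact le_max_right _ _
          · rw [abs_zero]
            exact le_trans zero_le_one (le_max_right _ _)
        · rw [habs]
          exact ((entry_abs_le' A i' j').trans hA).trans (le_max_left _ _)
    calc |Ring.inverse MA.det| * |MA.adjugate i j|
        ≤ M⁻¹ * ((Nat.factorial d : ℝ) * (max N 1) ^ d) := by
          apply mul_le_mul h1 h2 (abs_nonneg _) (by positivity)
      _ = eb := by rw [heb]; ring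
  apply ContinuousLinearMap.opNorm_le_bound _ (by positivity)
  intro v
  have hBv : B v = MB.mulVec v := by
    have h1 : Matrix.toLin' MB = (B : (Fin d → ℝ) →ₗ[ℝ] (Fin d → ℝ)) := Matrix.toLin'_toMatrix' _
    have h2 : B v = (B : (Fin d → ℝ) →ₗ[ℝ] (Fin d → ℝ)) v := rfl
    rw [h2, ← h1, Matrix.toLin'_apply]
  rw [hBv]
  rw [show (d : ℝ) * eb * ‖v‖ = (d : ℝ) * (eb * ‖v‖) by ring]
  apply pi_norm_le_iff_of_nonneg (by positivity) |>.mpr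
  intro i
  have hmv : MB.mulVec v i = ∑ j, MB i j * v j := by
    simp [Matrix.mulVec, dotProduct]
  rw [Real.norm_eq_abs, hmv]
  calc |∑ j, MB i j * v j| ≤ ∑ j, |MB i j * v j| := Finset.abs_sum_le_sum_abs _ _
    _ ≤ ∑ _j : Fin d, eb * ‖v‖ := by
        apply Finset.sum_le_sum
        intro j _
        rw [abs_mul]
        apply mul_le_mul (hentry i j) _ (abs_nonneg _) heb0
        rw [← Real.norm_eq_abs]
        exact norm_le_pi_norm v j
    _ = (d : ℝ) * (eb * ‖v‖) := by
        rw [Finset.sum_const, Finset.card_univ, Fintype.card_fin, nsmul_eq_mul]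

private lemma comp_fderiv_id' {d k : ℕ} {ρ : (Fin d → ℝ) → (Fin d → ℝ)} (hk : 1 ≤ k)
    (hρ : ContDiff ℝ k ρ) (hbij : Function.Bijective ρ)
    (hg : ContDiff ℝ k (Function.invFun ρ)) :
    (∀ z, (fderiv ℝ ρ (Function.invFun ρ z)).comp (fderiv ℝ (Function.invFun ρ) z)
        = ContinuousLinearMap.id ℝ _) ∧
    (∀ z, (fderiv ℝ (Function.invFun ρ) z).comp (fderiv ℝ ρ (Function.invFun ρ z))
        = ContinuousLinearMap.id ℝ _) := by
  have h1le : (1 : WithTop ℕ∞) ≤ (k : WithTop ℕ∞) := by exact_mod_cast hk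
  have hρdiff : Differentiable ℝ ρ := hρ.differentiable (zero_lt_one.trans_le h1le).ne'
  have hgdiff : Differentiable ℝ (Function.invFun ρ) := hg.differentiable (zero_lt_one.trans_le h1le).ne'
  have hρg : ∀ z, ρ (Function.invFun ρ z) = z := fun z =>
    Function.rightInverse_invFun hbij.surjective z
  have hgρ : ∀ x, Function.invFun ρ (ρ x) = x := fun x =>
    Function.leftInverse_invFun hbij.injective x
  constructor
  · intro z
    have h := fderiv_comp (𝕜 := ℝ) (g := ρ) (f := Function.invFun ρ) z (hρdiff _) (hgdiff z)
    have hco : ρ ∘ Function.invFun ρ = _root_.id := funext hρg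
    rw [hco, fderiv_id] at h
    exact h.symm
  · intro z
    have h := fderiv_comp (𝕜 := ℝ) (g := Function.invFun ρ) (f := ρ) (Function.invFun ρ z)
      (by rw [hρg]; exact hgdiff _) (hρdiff (Function.invFun ρ z))
    have hco : Function.invFun ρ ∘ ρ = _root_.id := funext hgρ
    rw [hco, fderiv_id, hρg] at h
    exact h.symm

set_option maxHeartbeats 1000000 in
private lemma fderiv_fderiv_invFun' {d k : ℕ} {ρ : (Fin d → ℝ) → (Fin d → ℝ)} (hk : 2 ≤ k)
    (hρ : ContDiff ℝ k ρ)
    (hg : ContDiff ℝ k (Function.invFun ρ))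
    (h1 : ∀ z, (fderiv ℝ ρ (Function.invFun ρ z)).comp (fderiv ℝ (Function.invFun ρ) z)
        = ContinuousLinearMap.id ℝ _)
    (h2 : ∀ z, (fderiv ℝ (Function.invFun ρ) z).comp (fderiv ℝ ρ (Function.invFun ρ z))
        = ContinuousLinearMap.id ℝ _) :
    fderiv ℝ (fderiv ℝ (Function.invFun ρ)) = fun z =>
      -((compL ℝ (Fin d → ℝ) ((Fin d → ℝ) →L[ℝ] (Fin d → ℝ)) ((Fin d → ℝ) →L[ℝ] (Fin d → ℝ)))
          ((mulLeftRight ℝ ((Fin d → ℝ) →L[ℝ] (Fin d → ℝ))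
              (fderiv ℝ (Function.invFun ρ) z)) (fderiv ℝ (Function.invFun ρ) z))
          (fderiv ℝ (fun w => fderiv ℝ ρ (Function.invFun ρ w)) z)) := by
  have hkk : ((k - 1 : ℕ) : WithTop ℕ∞) + 1 = (k : ℕ) := by
    have h : ((k - 1) + 1 : ℕ) = k := Nat.sub_add_cancel (by omega)
    exact_mod_cast congrArg (Nat.cast : ℕ → WithTop ℕ∞) h
  have hQ : ContDiff ℝ (k - 1 : ℕ) (fderiv ℝ ρ) := hρ.fderiv_right hkk.le
  have hQg : ContDiff ℝ (k - 1 : ℕ) (fun w => fderiv ℝ ρ (Function.invFun ρ w)) :=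
    hQ.comp (hg.of_le (by exact_mod_cast Nat.sub_le k 1))
  have h1lek1 : (1 : WithTop ℕ∞) ≤ ((k - 1 : ℕ) : WithTop ℕ∞) := by
    exact_mod_cast Nat.le_sub_of_add_le hk
  let u : (Fin d → ℝ) → ((Fin d → ℝ) →L[ℝ] (Fin d → ℝ))ˣ := fun z =>
    { val := fderiv ℝ ρ (Function.invFun ρ z)
      inv := fderiv ℝ (Function.invFun ρ) z
      val_inv := by rw [ContinuousLinearMap.mul_def, h1 z, ContinuousLinearMap.one_def]
      inv_val := by rw [ContinuousLinearMap.mul_def, h2 z, ContinuousLinearMap.one_def] }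
  have hPinv : fderiv ℝ (Function.invFun ρ)
      = fun z => Ring.inverse (fderiv ℝ ρ (Function.invFun ρ z)) := by
    funext z
    rw [show fderiv ℝ ρ (Function.invFun ρ z) = (u z : (Fin d → ℝ) →L[ℝ] (Fin d → ℝ)) from rfl,
      Ring.inverse_unit]
    rfl
  funext z
  have hinner : HasFDerivAt (fun w => fderiv ℝ ρ (Function.invFun ρ w))
      (fderiv ℝ (fun w => fderiv ℝ ρ (Function.invFun ρ w)) z) z :=
    ((hQg.differentiable (zero_lt_one.trans_le h1lek1).ne') z).hasFDerivAt
  have houter := hasFDerivAt_ringInverse (𝕜 := ℝ) (u z)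
  have hcomp := houter.comp z hinner
  have heq : (Ring.inverse ∘ fun w => fderiv ℝ ρ (Function.invFun ρ w))
      = fun w => Ring.inverse (fderiv ℝ ρ (Function.invFun ρ w)) := rfl
  rw [heq] at hcomp
  conv_lhs => rw [hPinv]
  rw [hcomp.fderiv]
  have hcoe : ((u z)⁻¹ : ((Fin d → ℝ) →L[ℝ] (Fin d → ℝ))ˣ).val
      = fderiv ℝ (Function.invFun ρ) z := rfl
  simp only [ContinuousLinearMap.neg_apply, ContinuousLinearMap.neg_comp,
    ContinuousLinearMap.compL_apply, hcoe]

private lemma norm_iteratedFDeriv_neg'' {E F : Type*} [NormedAddCommGroup E] [NormedSpace ℝ E]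
    [NormedAddCommGroup F] [NormedSpace ℝ F] (f : E → F) (i : ℕ) (x : E) :
    ‖iteratedFDeriv ℝ i (fun z => -(f z)) x‖ = ‖iteratedFDeriv ℝ i f x‖ := by
  have h : iteratedFDeriv ℝ i (fun z => -(f z)) x = -(iteratedFDeriv ℝ i f x) :=
    iteratedFDeriv_neg_apply (𝕜 := ℝ) (f := f) (x := x)
  rw [h, norm_neg]

private lemma sum_choose_mul' (i : ℕ) (a b : ℝ) :
    ∑ r ∈ Finset.range (i + 1), (i.choose r : ℝ) * a * b = 2 ^ i * a * b := by
  rw [← Finset.sum_mul, ← Finset.sum_mul]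
  congr 2
  exact_mod_cast congrArg (Nat.cast : ℕ → ℝ) (Nat.sum_range_choose i)

end AuxLemmas

set_option maxHeartbeats 2000000 in
/-- If `ρ` is a `C^k`-diffeomorphism of `ℝ^d` with `M ≤ |det Dρ|` and `|D^i ρ| ≤ N` for
`i = 1,…,k`, then its inverse `g = ρ⁻¹` satisfies `M' ≤ |det Dg|` and `|D^i g| ≤ N'`
with constants `M' = M'(N,d)` and `N' = N'(N,M,d,k)`. -/
theorem inverse_diffeo_bounds (d k : ℕ) (hk : 1 ≤ k) (M N : ℝ) (hM : 0 < M) (hN : 0 < N) :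
    ∃ M' N' : ℝ, 0 < M' ∧ 0 < N' ∧
      ∀ ρ : (Fin d → ℝ) → (Fin d → ℝ),
        ContDiff ℝ k ρ → Function.Bijective ρ → ContDiff ℝ k (Function.invFun ρ) →
        (∀ x, M ≤ |(fderiv ℝ ρ x).det|) →
        (∀ x, ∀ i : ℕ, 1 ≤ i → i ≤ k → ‖iteratedFDeriv ℝ i ρ x‖ ≤ N) →
        (∀ x, M' ≤ |(fderiv ℝ (Function.invFun ρ) x).det|) ∧
        (∀ x, ∀ i : ℕ, 1 ≤ i → i ≤ k → ‖iteratedFDeriv ℝ i (Function.invFun ρ) x‖ ≤ N') := by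
  classical
  set KA : ℝ := (Nat.factorial d : ℝ) * (max N 1) ^ d with hKA
  have hKA1 : (1:ℝ) ≤ KA := by
    have h1 : (1:ℝ) ≤ (Nat.factorial d : ℝ) := by
      exact_mod_cast Nat.one_le_iff_ne_zero.2 (Nat.factorial_ne_zero d)
    have h2 : (1:ℝ) ≤ (max N 1) ^ d := one_le_pow₀ (le_max_right _ _)
    nlinarith
  have hKApos : (0:ℝ) < KA := lt_of_lt_of_le one_pos hKA1
  -- the crucial inductive bound on derivatives of `fderiv (invFun ρ)`
  have key : ∀ n : ℕ, ∃ C : ℝ, 1 ≤ C ∧ ∀ ρ : (Fin d → ℝ) → (Fin d → ℝ),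
      ContDiff ℝ k ρ → Function.Bijective ρ → ContDiff ℝ k (Function.invFun ρ) →
      (∀ x, M ≤ |(fderiv ℝ ρ x).det|) →
      (∀ x, ∀ i : ℕ, 1 ≤ i → i ≤ k → ‖iteratedFDeriv ℝ i ρ x‖ ≤ N) →
      ∀ m, m ≤ min n (k - 1) → ∀ y,
        ‖iteratedFDeriv ℝ m (fderiv ℝ (Function.invFun ρ)) y‖ ≤ C := by
    intro n
    induction n with
    | zero =>
      refine ⟨max ((d : ℝ) * (KA / M)) 1, le_max_right _ _, ?_⟩
      intro ρ hρ hbij hg hdet hbound m hm y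
      have hm0 : m = 0 := by
        have := le_trans hm (min_le_left _ _)
        omega
      subst hm0
      rw [norm_iteratedFDeriv_zero]
      obtain ⟨h1, _h2⟩ := comp_fderiv_id' hk hρ hbij hg
      have hQnorm : ∀ z, ‖fderiv ℝ ρ z‖ ≤ N := by
        intro z
        calc ‖fderiv ℝ ρ z‖ = ‖iteratedFDeriv ℝ 0 (fderiv ℝ ρ) z‖ :=
              (norm_iteratedFDeriv_zero).symm
          _ = ‖iteratedFDeriv ℝ (0 + 1) ρ z‖ := norm_iteratedFDeriv_fderiv
          _ ≤ N := hbound z 1 le_rfl hk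
      have h := clm_inv_norm_bound' hM (fderiv ℝ ρ (Function.invFun ρ y))
        (fderiv ℝ (Function.invFun ρ) y) (h1 y) (hQnorm _) (hdet _)
      rw [← hKA] at h
      rw [show (d : ℝ) * (KA / M) = (d : ℝ) * (KA / M) from rfl]
      exact h.trans (le_max_left _ _)
    | succ n ih =>
      obtain ⟨C, hC1, hC⟩ := ih
      have hCpos : (0:ℝ) < C := lt_of_lt_of_le one_pos hC1
      set Cstep : ℝ := 2 ^ k * (2 ^ k * (C * C)) * ((Nat.factorial k : ℝ) * N * C ^ k) with hCstep
      refine ⟨max C Cstep, le_trans hC1 (le_max_left _ _), ?_⟩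
      intro ρ hρ hbij hg hdet hbound m hm y
      have hCρ := hC ρ hρ hbij hg hdet hbound
      by_cases hmold : m ≤ min n (k - 1)
      · exact (hCρ m hmold y).trans (le_max_left _ _)
      -- now 1 ≤ m, m = n+1, m ≤ k-1, so k ≥ 2
      have hmn1 : m ≤ n + 1 := le_trans hm (min_le_left _ _)
      have hmk : m ≤ k - 1 := le_trans hm (min_le_right _ _)
      have hm1 : 1 ≤ m := by
        rcases Nat.eq_zero_or_pos m with h | h
        · exfalso; apply hmold; subst h; exact le_min (Nat.zero_le _) (Nat.zero_le _)
        · exact h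
      have hmn : m = n + 1 := by
        rcases Nat.lt_or_ge m (n+1) with h | h
        · exfalso; apply hmold; exact le_min (by omega) hmk
        · omega
      have hk2 : 2 ≤ k := by omega
      obtain ⟨h1, h2⟩ := comp_fderiv_id' hk hρ hbij hg
      have hkk : ((k - 1 : ℕ) : WithTop ℕ∞) + 1 = (k : ℕ) := by
        have h : ((k - 1) + 1 : ℕ) = k := Nat.sub_add_cancel (by omega)
        exact_mod_cast congrArg (Nat.cast : ℕ → WithTop ℕ∞) h
      have hkk2 : ((k - 2 : ℕ) : WithTop ℕ∞) + 1 = ((k - 1 : ℕ) : WithTop ℕ∞) := by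
        have h : ((k - 2) + 1 : ℕ) = k - 1 := by omega
        exact_mod_cast congrArg (Nat.cast : ℕ → WithTop ℕ∞) h
      have hQ : ContDiff ℝ (k - 1 : ℕ) (fderiv ℝ ρ) := hρ.fderiv_right hkk.le
      have hP : ContDiff ℝ (k - 1 : ℕ) (fderiv ℝ (Function.invFun ρ)) := hg.fderiv_right hkk.le
      have hQg : ContDiff ℝ (k - 1 : ℕ) (fun w => fderiv ℝ ρ (Function.invFun ρ w)) :=
        hQ.comp (hg.of_le (by exact_mod_cast Nat.sub_le k 1))
      have hRsm : ContDiff ℝ (k - 2 : ℕ)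
          (fderiv ℝ (fun w => fderiv ℝ ρ (Function.invFun ρ w))) :=
        hQg.fderiv_right hkk2.le
      have hPk2 : ContDiff ℝ (k - 2 : ℕ) (fderiv ℝ (Function.invFun ρ)) :=
        hP.of_le ((Nat.cast_le (α := WithTop ℕ∞)).2 (show k - 2 ≤ k - 1 by omega))
      have hWsm : ContDiff ℝ (k - 2 : ℕ) (fun w =>
          (ContinuousLinearMap.mulLeftRight ℝ ((Fin d → ℝ) →L[ℝ] (Fin d → ℝ))
            (fderiv ℝ (Function.invFun ρ) w)) (fderiv ℝ (Function.invFun ρ) w)) := by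
        have hB : ContDiff ℝ (k - 2 : ℕ) (fun w =>
            ContinuousLinearMap.mulLeftRight ℝ ((Fin d → ℝ) →L[ℝ] (Fin d → ℝ))
              (fderiv ℝ (Function.invFun ρ) w)) :=
          ContDiff.clm_apply (contDiff_const (c := ContinuousLinearMap.mulLeftRight ℝ
            ((Fin d → ℝ) →L[ℝ] (Fin d → ℝ)))) hPk2
        exact hB.clm_apply hPk2
      -- bound on derivatives of fderiv ρ
      have hQder : ∀ z, ∀ i, i ≤ k - 1 → ‖iteratedFDeriv ℝ i (fderiv ℝ ρ) z‖ ≤ N := by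
        intro z i hi
        rw [norm_iteratedFDeriv_fderiv]
        exact hbound z (i + 1) (by omega) (by omega)
      -- bound on derivatives of (fderiv ρ) ∘ (invFun ρ)
      have hcompQg : ∀ z, ∀ j, j ≤ m →
          ‖iteratedFDeriv ℝ j (fun w => fderiv ℝ ρ (Function.invFun ρ w)) z‖
            ≤ (Nat.factorial k : ℝ) * N * C ^ k := by
        intro z j hj
        have h := norm_iteratedFDeriv_comp_le (𝕜 := ℝ) (g := fderiv ℝ ρ)
          (f := Function.invFun ρ) (n := j) (N := ((k - 1 : ℕ) : WithTop ℕ∞)) hQ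
          (hg.of_le (by exact_mod_cast Nat.sub_le k 1))
          ((Nat.cast_le (α := WithTop ℕ∞)).2 (show j ≤ k - 1 by omega)) z (C := N) (D := C)
          (fun i hi => hQder _ i (by omega))
          ?_
        · have hfun : (fderiv ℝ ρ ∘ Function.invFun ρ)
              = fun w => fderiv ℝ ρ (Function.invFun ρ w) := rfl
          rw [hfun] at h
          refine h.trans ?_
          have hf1 : (Nat.factorial j : ℝ) ≤ (Nat.factorial k : ℝ) := by
            exact_mod_cast Nat.factorial_le (by omega)
          have hf2 : C ^ j ≤ C ^ k := pow_le_pow_right₀ hC1 (by omega)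
          calc (Nat.factorial j : ℝ) * N * C ^ j
              ≤ (Nat.factorial k : ℝ) * N * C ^ j := by
                apply mul_le_mul_of_nonneg_right (mul_le_mul_of_nonneg_right hf1 hN.le)
                positivity
            _ ≤ (Nat.factorial k : ℝ) * N * C ^ k := by
                apply mul_le_mul_of_nonneg_left hf2
                positivity
        · intro i hi1 hi2
          have hieq : i - 1 + 1 = i := by omega
          rw [← hieq, ← norm_iteratedFDeriv_fderiv]
          exact (hCρ (i - 1) (le_min (by omega) (by omega)) z).trans
            (le_self_pow₀ hC1 (by omega))
      -- bound on derivatives of R = fderiv (Q ∘ g)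
      have hRbound : ∀ j, j ≤ m - 1 →
          ‖iteratedFDeriv ℝ j (fderiv ℝ (fun w => fderiv ℝ ρ (Function.invFun ρ w))) y‖
            ≤ (Nat.factorial k : ℝ) * N * C ^ k := by
        intro j hj
        rw [norm_iteratedFDeriv_fderiv]
        exact hcompQg y (j + 1) (by omega)
      -- bound on derivatives of W
      have hWbound : ∀ i, i ≤ m - 1 →
          ‖iteratedFDeriv ℝ i (fun w =>
            (ContinuousLinearMap.mulLeftRight ℝ ((Fin d → ℝ) →L[ℝ] (Fin d → ℝ))
              (fderiv ℝ (Function.invFun ρ) w)) (fderiv ℝ (Function.invFun ρ) w)) y‖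
            ≤ 2 ^ k * (C * C) := by
        intro i hi
        have h := (ContinuousLinearMap.mulLeftRight ℝ
            ((Fin d → ℝ) →L[ℝ] (Fin d → ℝ))).norm_iteratedFDeriv_le_of_bilinear
          (f := fderiv ℝ (Function.invFun ρ)) (g := fderiv ℝ (Function.invFun ρ))
          (N := ((k - 1 : ℕ) : WithTop ℕ∞)) hP hP y ((Nat.cast_le (α := WithTop ℕ∞)).2 (show i ≤ k - 1 by omega))
        refine h.trans ?_
        have hsum : ∑ r ∈ Finset.range (i + 1), (i.choose r : ℝ)
              * ‖iteratedFDeriv ℝ r (fderiv ℝ (Function.invFun ρ)) y‖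
              * ‖iteratedFDeriv ℝ (i - r) (fderiv ℝ (Function.invFun ρ)) y‖
            ≤ ∑ r ∈ Finset.range (i + 1), (i.choose r : ℝ) * C * C := by
          apply Finset.sum_le_sum
          intro r hr
          have hr' : r ≤ i := Finset.mem_range_succ_iff.1 hr
          have hb1 := hCρ r (le_min (by omega) (by omega)) y
          have hb2 := hCρ (i - r) (le_min (by omega) (by omega)) y
          apply mul_le_mul (mul_le_mul_of_nonneg_left hb1 (by positivity)) hb2
            (norm_nonneg _) (by positivity)
        calc ‖ContinuousLinearMap.mulLeftRight ℝ ((Fin d → ℝ) →L[ℝ] (Fin d → ℝ))‖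
              * ∑ r ∈ Finset.range (i + 1), (i.choose r : ℝ)
                * ‖iteratedFDeriv ℝ r (fderiv ℝ (Function.invFun ρ)) y‖
                * ‖iteratedFDeriv ℝ (i - r) (fderiv ℝ (Function.invFun ρ)) y‖
            ≤ 1 * ∑ r ∈ Finset.range (i + 1), (i.choose r : ℝ) * C * C := by
              apply mul_le_mul (ContinuousLinearMap.opNorm_mulLeftRight_le ℝ _) hsum
              · apply Finset.sum_nonneg
                intro r _
                positivity
              · exact zero_le_one
          _ = 2 ^ i * C * C := by rw [one_mul, sum_choose_mul']
          _ ≤ 2 ^ k * (C * C) := by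
              have : (2:ℝ) ^ i ≤ 2 ^ k := pow_le_pow_right₀ one_le_two (by omega)
              nlinarith
      -- main computation
      have hfd := fderiv_fderiv_invFun' hk2 hρ hg h1 h2
      have hmm : m - 1 + 1 = m := by omega
      calc ‖iteratedFDeriv ℝ m (fderiv ℝ (Function.invFun ρ)) y‖
          = ‖iteratedFDeriv ℝ (m - 1) (fderiv ℝ (fderiv ℝ (Function.invFun ρ))) y‖ := by
            conv_lhs => rw [← hmm]
            rw [← norm_iteratedFDeriv_fderiv]
        _ = ‖iteratedFDeriv ℝ (m - 1) (fun z =>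
              (ContinuousLinearMap.compL ℝ (Fin d → ℝ) ((Fin d → ℝ) →L[ℝ] (Fin d → ℝ))
                  ((Fin d → ℝ) →L[ℝ] (Fin d → ℝ)))
                ((ContinuousLinearMap.mulLeftRight ℝ ((Fin d → ℝ) →L[ℝ] (Fin d → ℝ))
                  (fderiv ℝ (Function.invFun ρ) z)) (fderiv ℝ (Function.invFun ρ) z))
                (fderiv ℝ (fun w => fderiv ℝ ρ (Function.invFun ρ w)) z)) y‖ := by
            rw [hfd]
            exact norm_iteratedFDeriv_neg'' _ _ _
        _ ≤ ‖ContinuousLinearMap.compL ℝ (Fin d → ℝ) ((Fin d → ℝ) →L[ℝ] (Fin d → ℝ))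
                ((Fin d → ℝ) →L[ℝ] (Fin d → ℝ))‖
              * ∑ r ∈ Finset.range ((m - 1) + 1), ((m - 1).choose r : ℝ)
                * ‖iteratedFDeriv ℝ r (fun w =>
                    (ContinuousLinearMap.mulLeftRight ℝ ((Fin d → ℝ) →L[ℝ] (Fin d → ℝ))
                      (fderiv ℝ (Function.invFun ρ) w)) (fderiv ℝ (Function.invFun ρ) w)) y‖
                * ‖iteratedFDeriv ℝ ((m - 1) - r)
                    (fderiv ℝ (fun w => fderiv ℝ ρ (Function.invFun ρ w))) y‖ :=
            (ContinuousLinearMap.compL ℝ (Fin d → ℝ) ((Fin d → ℝ) →L[ℝ] (Fin d → ℝ))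
              ((Fin d → ℝ) →L[ℝ] (Fin d → ℝ))).norm_iteratedFDeriv_le_of_bilinear
              hWsm hRsm y ((Nat.cast_le (α := WithTop ℕ∞)).2 (show m - 1 ≤ k - 2 by omega))
        _ ≤ 1 * ∑ r ∈ Finset.range ((m - 1) + 1), ((m - 1).choose r : ℝ)
              * (2 ^ k * (C * C)) * ((Nat.factorial k : ℝ) * N * C ^ k) := by
            apply mul_le_mul (ContinuousLinearMap.norm_compL_le ℝ _ _ _) ?_ ?_ zero_le_one
            · apply Finset.sum_le_sum
              intro r hr
              have hr' : r ≤ m - 1 := Finset.mem_range_succ_iff.1 hr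
              apply mul_le_mul (mul_le_mul_of_nonneg_left (hWbound r hr') (by positivity))
                (hRbound _ (by omega)) (norm_nonneg _) (by positivity)
            · apply Finset.sum_nonneg
              intro r _
              positivity
        _ = 2 ^ (m - 1) * (2 ^ k * (C * C)) * ((Nat.factorial k : ℝ) * N * C ^ k) := by
            rw [one_mul, sum_choose_mul']
        _ ≤ Cstep := by
            rw [hCstep]
            have h2m : (2:ℝ) ^ (m - 1) ≤ 2 ^ k := pow_le_pow_right₀ one_le_two (by omega)
            have hpos : (0:ℝ) ≤ (2 ^ k * (C * C)) * ((Nat.factorial k : ℝ) * N * C ^ k) := by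
              positivity
            nlinarith
        _ ≤ max C Cstep := le_max_right _ _
  obtain ⟨C, hC1, hC⟩ := key (k - 1)
  refine ⟨KA⁻¹, C, by positivity, lt_of_lt_of_le one_pos hC1, ?_⟩
  intro ρ hρ hbij hg hdet hbound
  obtain ⟨h1, _h2⟩ := comp_fderiv_id' hk hρ hbij hg
  have hQnorm : ∀ z, ‖fderiv ℝ ρ z‖ ≤ N := by
    intro z
    calc ‖fderiv ℝ ρ z‖ = ‖iteratedFDeriv ℝ 0 (fderiv ℝ ρ) z‖ := (norm_iteratedFDeriv_zero).symm
      _ = ‖iteratedFDeriv ℝ (0 + 1) ρ z‖ := norm_iteratedFDeriv_fderiv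
      _ ≤ N := hbound z 1 le_rfl hk
  constructor
  · intro y
    have hdc : (fderiv ℝ ρ (Function.invFun ρ y)).det * (fderiv ℝ (Function.invFun ρ) y).det
        = 1 := by
      have h := congrArg ContinuousLinearMap.det (h1 y)
      simpa only [ContinuousLinearMap.det, ContinuousLinearMap.toLinearMap_comp, LinearMap.det_comp,
        ContinuousLinearMap.coe_id, LinearMap.det_id] using h
    have hApos : 0 < |(fderiv ℝ ρ (Function.invFun ρ y)).det| := lt_of_lt_of_le hM (hdet _)
    have hBdet : (fderiv ℝ (Function.invFun ρ) y).det
        = ((fderiv ℝ ρ (Function.invFun ρ y)).det)⁻¹ := eq_inv_of_mul_eq_one_right hdc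
    rw [hBdet, abs_inv]
    have hAle : |(fderiv ℝ ρ (Function.invFun ρ y)).det| ≤ KA :=
      clm_det_abs_le' _ (hQnorm _)
    exact inv_anti₀ hApos hAle
  · intro y i hi1 hik
    have hieq : i - 1 + 1 = i := by omega
    rw [← hieq, ← norm_iteratedFDeriv_fderiv]
    exact hC ρ hρ hbij hg hdet hbound (i - 1) (le_min (by omega) (by omega)) y
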